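/- arXiv:1612.02158 — 4 statements merged into one kernel-verified Lean document; each statement's English description precedes it below -/
import Mathlib

section
/- Define recursively a family of multihypergraphs H(k,l,m) = (V(k,l,m), E₁(k,l,m) ∪ E₂(k,l,m) ∪ E₃(k,l,m)) for positive integers k,l,m as follows: H(1,1,1) has a single vertex p and one edge {p} in each of E₁, E₂, E₃. If not all of k,l,m equal 1, then V(k,l,m) is the disjoint union of V(k-1,l,m), V(k,l-1,m), V(k,l,m-1) and a new vertex p (using the convention that a hypergraph with an index equal to 0 is empty); E₁(k,l,m) consists of all singletons {v} for v ∈ V(1,l,m) if k = 1, and otherwise of all sets e ∪ {p} for e ∈ E₁(k-1,l,m) together with all edges of E₁(k,l-1,m) and E₁(k,l,m-1); E₂ and E₃ are defined symmetrically (adding p to edges of E₂(k,l-1,m), respectively of E₃(k,l,m-1)). Then for every coloring of V(k,l,m) with three colors c₁, c₂, c₃, there exists an index i ∈ {1,2,3} and an edge e ∈ Eᵢ(k,l,m) all of whose vertices have color cᵢ. -/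
/-- The recursively defined multihypergraph `H(k,l,m)`, with vertices encoded as
lists over `Fin 3` (the branch taken at each recursive step; the new vertex `p` is `[]`).
The first argument is fuel (take `k+l+m`). Returns `(V, E₁, E₂, E₃)`. -/
def HHrec : ℕ → ℕ → ℕ → ℕ →
    Finset (List (Fin 3)) × Finset (Finset (List (Fin 3))) × Finset (Finset (List (Fin 3)))
      × Finset (Finset (List (Fin 3)))
  | 0, _, _, _ => (∅, ∅, ∅, ∅)
  | fuel+1, k, l, m =>
    if k = 0 ∨ l = 0 ∨ m = 0 then (∅, ∅, ∅, ∅)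
    else if k = 1 ∧ l = 1 ∧ m = 1 then ({[]}, {{[]}}, {{[]}}, {{[]}})
    else
      let A := HHrec fuel (k-1) l m
      let B := HHrec fuel k (l-1) m
      let C := HHrec fuel k l (m-1)
      let V : Finset (List (Fin 3)) :=
        A.1.image (List.cons 0) ∪ B.1.image (List.cons 1) ∪ C.1.image (List.cons 2)
          ∪ {([] : List (Fin 3))}
      let E1 : Finset (Finset (List (Fin 3))) :=
        if k = 1 then V.image (fun v => ({v} : Finset (List (Fin 3))))
        else A.2.1.image (fun e => insert ([] : List (Fin 3)) (e.image (List.cons 0)))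
          ∪ B.2.1.image (fun e => e.image (List.cons 1))
          ∪ C.2.1.image (fun e => e.image (List.cons 2))
      let E2 : Finset (Finset (List (Fin 3))) :=
        if l = 1 then V.image (fun v => ({v} : Finset (List (Fin 3))))
        else B.2.2.1.image (fun e => insert ([] : List (Fin 3)) (e.image (List.cons 1)))
          ∪ A.2.2.1.image (fun e => e.image (List.cons 0))
          ∪ C.2.2.1.image (fun e => e.image (List.cons 2))
      let E3 : Finset (Finset (List (Fin 3))) :=
        if m = 1 then V.image (fun v => ({v} : Finset (List (Fin 3))))
        else C.2.2.2.image (fun e => insert ([] : List (Fin 3)) (e.image (List.cons 2)))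
          ∪ A.2.2.2.image (fun e => e.image (List.cons 0))
          ∪ B.2.2.2.image (fun e => e.image (List.cons 1))
      (V, E1, E2, E3)

/-- Vertex set of `H(k,l,m)`. -/
def HV (k l m : ℕ) : Finset (List (Fin 3)) := (HHrec (k+l+m) k l m).1

/-- Edge family `E₁(k,l,m)` (edges of size `k`). -/
def HE1 (k l m : ℕ) : Finset (Finset (List (Fin 3))) := (HHrec (k+l+m) k l m).2.1

/-- Edge family `E₂(k,l,m)` (edges of size `l`). -/
def HE2 (k l m : ℕ) : Finset (Finset (List (Fin 3))) := (HHrec (k+l+m) k l m).2.2.1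

/-- Edge family `E₃(k,l,m)` (edges of size `m`). -/
def HE3 (k l m : ℕ) : Finset (Finset (List (Fin 3))) := (HHrec (k+l+m) k l m).2.2.2

/-- The three edge families indexed by `Fin 3`. -/
def HE (k l m : ℕ) : Fin 3 → Finset (Finset (List (Fin 3))) := ![HE1 k l m, HE2 k l m, HE3 k l m]

lemma HV_eq (k l m : ℕ) (hk : 1 ≤ k) (hl : 1 ≤ l) (hm : 1 ≤ m) (h : ¬(k = 1 ∧ l = 1 ∧ m = 1)) :
    HV k l m = (HV (k-1) l m).image (List.cons 0) ∪ (HV k (l-1) m).image (List.cons 1)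
      ∪ (HV k l (m-1)).image (List.cons 2) ∪ {([] : List (Fin 3))} := by
  obtain ⟨n, hn⟩ : ∃ n, k + l + m = n + 1 := ⟨k+l+m-1, by omega⟩
  have e1 : HHrec n (k-1) l m = HHrec ((k-1)+l+m) (k-1) l m := by rw [show n = (k-1)+l+m by omega]
  have e2 : HHrec n k (l-1) m = HHrec (k+(l-1)+m) k (l-1) m := by rw [show n = k+(l-1)+m by omega]
  have e3 : HHrec n k l (m-1) = HHrec (k+l+(m-1)) k l (m-1) := by rw [show n = k+l+(m-1) by omega]
  unfold HV
  rw [hn, HHrec]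
  simp only [show ¬(k = 0 ∨ l = 0 ∨ m = 0) by omega, if_false, h, if_false, e1, e2, e3]

lemma HE1_one (l m : ℕ) (hl : 1 ≤ l) (hm : 1 ≤ m) :
    HE1 1 l m = (HV 1 l m).image (fun v => ({v} : Finset (List (Fin 3)))) := by
  by_cases h : l = 1 ∧ m = 1
  · obtain ⟨rfl, rfl⟩ := h; rfl
  · have h' : ¬((1:ℕ) = 1 ∧ l = 1 ∧ m = 1) := by tauto
    obtain ⟨n, hn⟩ : ∃ n, 1 + l + m = n + 1 := ⟨l+m, by omega⟩
    have e1 : (HHrec n 0 l m).1 = HV 0 l m := by rw [show n = 0+l+m by omega]; rfl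
    have e2 : (HHrec n 1 (l-1) m).1 = HV 1 (l-1) m := by rw [show n = 1+(l-1)+m by omega]; rfl
    have e3 : (HHrec n 1 l (m-1)).1 = HV 1 l (m-1) := by rw [show n = 1+l+(m-1) by omega]; rfl
    unfold HE1
    rw [hn, HHrec]
    simp only [show ¬((1:ℕ) = 0 ∨ l = 0 ∨ m = 0) by omega, if_false, h', if_true, if_pos rfl,
      e1, e2, e3]
    rw [HV_eq 1 l m le_rfl hl hm h']
    simp [h, Finset.union_assoc]

lemma HE2_one (k m : ℕ) (hk : 1 ≤ k) (hm : 1 ≤ m) :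
    HE2 k 1 m = (HV k 1 m).image (fun v => ({v} : Finset (List (Fin 3)))) := by
  by_cases h : k = 1 ∧ m = 1
  · obtain ⟨rfl, rfl⟩ := h; rfl
  · have h' : ¬(k = 1 ∧ (1:ℕ) = 1 ∧ m = 1) := by tauto
    obtain ⟨n, hn⟩ : ∃ n, k + 1 + m = n + 1 := ⟨k+m, by omega⟩
    have e1 : (HHrec n (k-1) 1 m).1 = HV (k-1) 1 m := by rw [show n = (k-1)+1+m by omega]; rfl
    have e2 : (HHrec n k 0 m).1 = HV k 0 m := by rw [show n = k+0+m by omega]; rfl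
    have e3 : (HHrec n k 1 (m-1)).1 = HV k 1 (m-1) := by rw [show n = k+1+(m-1) by omega]; rfl
    unfold HE2
    rw [hn, HHrec]
    simp only [show ¬(k = 0 ∨ (1:ℕ) = 0 ∨ m = 0) by omega, if_false, h', if_true, if_pos rfl,
      e1, e2, e3]
    rw [HV_eq k 1 m hk le_rfl hm h']
    simp [h, Finset.union_assoc]

lemma HE3_one (k l : ℕ) (hk : 1 ≤ k) (hl : 1 ≤ l) :
    HE3 k l 1 = (HV k l 1).image (fun v => ({v} : Finset (List (Fin 3)))) := by
  by_cases h : k = 1 ∧ l = 1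
  · obtain ⟨rfl, rfl⟩ := h; rfl
  · have h' : ¬(k = 1 ∧ l = 1 ∧ (1:ℕ) = 1) := by tauto
    obtain ⟨n, hn⟩ : ∃ n, k + l + 1 = n + 1 := ⟨k+l, by omega⟩
    have e1 : (HHrec n (k-1) l 1).1 = HV (k-1) l 1 := by rw [show n = (k-1)+l+1 by omega]; rfl
    have e2 : (HHrec n k (l-1) 1).1 = HV k (l-1) 1 := by rw [show n = k+(l-1)+1 by omega]; rfl
    have e3 : (HHrec n k l 0).1 = HV k l 0 := by rw [show n = k+l+0 by omega]; rfl
    unfold HE3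
    rw [hn, HHrec]
    simp only [show ¬(k = 0 ∨ l = 0 ∨ (1:ℕ) = 0) by omega, if_false, h', if_true, if_pos rfl,
      e1, e2, e3]
    rw [HV_eq k l 1 hk hl le_rfl h']
    simp [h, Finset.union_assoc]

lemma HE1_two (k l m : ℕ) (hk : 2 ≤ k) (hl : 1 ≤ l) (hm : 1 ≤ m) :
    HE1 k l m = (HE1 (k-1) l m).image (fun e => insert ([]:List (Fin 3)) (e.image (List.cons 0)))
      ∪ (HE1 k (l-1) m).image (fun e => e.image (List.cons 1))
      ∪ (HE1 k l (m-1)).image (fun e => e.image (List.cons 2)) := by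
  obtain ⟨n, hn⟩ : ∃ n, k + l + m = n + 1 := ⟨k+l+m-1, by omega⟩
  have e1 : (HHrec n (k-1) l m).2.1 = HE1 (k-1) l m := by rw [show n = (k-1)+l+m by omega]; rfl
  have e2 : (HHrec n k (l-1) m).2.1 = HE1 k (l-1) m := by rw [show n = k+(l-1)+m by omega]; rfl
  have e3 : (HHrec n k l (m-1)).2.1 = HE1 k l (m-1) := by rw [show n = k+l+(m-1) by omega]; rfl
  unfold HE1
  rw [hn, HHrec]
  simp only [show ¬(k = 0 ∨ l = 0 ∨ m = 0) by omega, if_false,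
    show ¬(k = 1 ∧ l = 1 ∧ m = 1) by omega, if_false, show ¬ k = 1 by omega, e1, e2, e3]
  simp [Finset.union_assoc]
  rfl

lemma HE2_two (k l m : ℕ) (hk : 1 ≤ k) (hl : 2 ≤ l) (hm : 1 ≤ m) :
    HE2 k l m = (HE2 k (l-1) m).image (fun e => insert ([]:List (Fin 3)) (e.image (List.cons 1)))
      ∪ (HE2 (k-1) l m).image (fun e => e.image (List.cons 0))
      ∪ (HE2 k l (m-1)).image (fun e => e.image (List.cons 2)) := by
  obtain ⟨n, hn⟩ : ∃ n, k + l + m = n + 1 := ⟨k+l+m-1, by omega⟩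
  have e1 : (HHrec n (k-1) l m).2.2.1 = HE2 (k-1) l m := by rw [show n = (k-1)+l+m by omega]; rfl
  have e2 : (HHrec n k (l-1) m).2.2.1 = HE2 k (l-1) m := by rw [show n = k+(l-1)+m by omega]; rfl
  have e3 : (HHrec n k l (m-1)).2.2.1 = HE2 k l (m-1) := by rw [show n = k+l+(m-1) by omega]; rfl
  unfold HE2
  rw [hn, HHrec]
  simp only [show ¬(k = 0 ∨ l = 0 ∨ m = 0) by omega, if_false,
    show ¬(k = 1 ∧ l = 1 ∧ m = 1) by omega, if_false, show ¬ l = 1 by omega, e1, e2, e3]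
  simp [Finset.union_assoc]
  rfl

lemma HE3_two (k l m : ℕ) (hk : 1 ≤ k) (hl : 1 ≤ l) (hm : 2 ≤ m) :
    HE3 k l m = (HE3 k l (m-1)).image (fun e => insert ([]:List (Fin 3)) (e.image (List.cons 2)))
      ∪ (HE3 (k-1) l m).image (fun e => e.image (List.cons 0))
      ∪ (HE3 k (l-1) m).image (fun e => e.image (List.cons 1)) := by
  obtain ⟨n, hn⟩ : ∃ n, k + l + m = n + 1 := ⟨k+l+m-1, by omega⟩
  have e1 : (HHrec n (k-1) l m).2.2.2 = HE3 (k-1) l m := by rw [show n = (k-1)+l+m by omega]; rfl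
  have e2 : (HHrec n k (l-1) m).2.2.2 = HE3 k (l-1) m := by rw [show n = k+(l-1)+m by omega]; rfl
  have e3 : (HHrec n k l (m-1)).2.2.2 = HE3 k l (m-1) := by rw [show n = k+l+(m-1) by omega]; rfl
  unfold HE3
  rw [hn, HHrec]
  simp only [show ¬(k = 0 ∨ l = 0 ∨ m = 0) by omega, if_false,
    show ¬(k = 1 ∧ l = 1 ∧ m = 1) by omega, if_false, show ¬ m = 1 by omega, e1, e2, e3]
  simp [Finset.union_assoc]
  rfl

lemma nil_mem_HV (k l m : ℕ) (hk : 1 ≤ k) (hl : 1 ≤ l) (hm : 1 ≤ m) :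
    ([] : List (Fin 3)) ∈ HV k l m := by
  by_cases h : k = 1 ∧ l = 1 ∧ m = 1
  · obtain ⟨rfl, rfl, rfl⟩ := h; decide
  · rw [HV_eq k l m hk hl hm h]; simp

lemma fin3_cases (j : Fin 3) : j = 0 ∨ j = 1 ∨ j = 2 := by revert j; decide

lemma HH_main (N : ℕ) : ∀ k l m : ℕ, k + l + m ≤ N → 1 ≤ k → 1 ≤ l → 1 ≤ m →
    ∀ χ : List (Fin 3) → Fin 3, ∃ i : Fin 3, ∃ e ∈ HE k l m i, ∀ v ∈ e, χ v = i := by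
  induction N with
  | zero => intro k l m h; omega
  | succ N ih =>
    intro k l m hN hk hl hm χ
    rcases fin3_cases (χ []) with hb | hb | hb
    -- ================= branch b = 0 =================
    · by_cases hk1 : k = 1
      · subst hk1
        refine ⟨0, {[]}, ?_, ?_⟩
        · show _ ∈ HE1 1 l m
          rw [HE1_one l m hl hm]
          exact Finset.mem_image_of_mem _ (nil_mem_HV 1 l m le_rfl hl hm)
        · intro v hv; rw [Finset.mem_singleton] at hv; subst hv; exact hb
      · have hk2 : 2 ≤ k := by omega
        obtain ⟨i, e, he, hcol⟩ := ih (k-1) l m (by omega) (by omega) hl hm (fun v => χ (0 :: v))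
        rcases fin3_cases i with rfl | rfl | rfl
        · replace he : e ∈ HE1 (k-1) l m := he
          refine ⟨0, insert [] (e.image (List.cons 0)), ?_, ?_⟩
          · show _ ∈ HE1 k l m
            rw [HE1_two k l m hk2 hl hm]
            exact Finset.mem_union_left _ (Finset.mem_union_left _
              (Finset.mem_image_of_mem _ he))
          · intro v hv
            rcases Finset.mem_insert.1 hv with rfl | hv
            · exact hb
            · obtain ⟨w, hw, rfl⟩ := Finset.mem_image.1 hv; exact hcol w hw
        · replace he : e ∈ HE2 (k-1) l m := he
          by_cases hl1 : l = 1
          · subst hl1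
            rw [HE2_one (k-1) m (by omega) hm] at he
            obtain ⟨v, hv, rfl⟩ := Finset.mem_image.1 he
            refine ⟨1, {(0:Fin 3) :: v}, ?_, ?_⟩
            · show _ ∈ HE2 k 1 m
              rw [HE2_one k m (by omega) hm]
              refine Finset.mem_image_of_mem _ ?_
              rw [HV_eq k 1 m (by omega) le_rfl hm (by omega)]
              exact Finset.mem_union_left _ (Finset.mem_union_left _
                (Finset.mem_union_left _ (Finset.mem_image_of_mem _ hv)))
            · intro w hw; rw [Finset.mem_singleton] at hw; subst hw
              exact hcol v (Finset.mem_singleton_self v)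
          · have hl2 : 2 ≤ l := by omega
            refine ⟨1, e.image (List.cons 0), ?_, ?_⟩
            · show _ ∈ HE2 k l m
              rw [HE2_two k l m hk hl2 hm]
              exact Finset.mem_union_left _ (Finset.mem_union_right _
                (Finset.mem_image_of_mem _ he))
            · intro v hv; obtain ⟨w, hw, rfl⟩ := Finset.mem_image.1 hv; exact hcol w hw
        · replace he : e ∈ HE3 (k-1) l m := he
          by_cases hm1 : m = 1
          · subst hm1
            rw [HE3_one (k-1) l (by omega) hl] at he
            obtain ⟨v, hv, rfl⟩ := Finset.mem_image.1 he
            refine ⟨2, {(0:Fin 3) :: v}, ?_, ?_⟩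
            · show _ ∈ HE3 k l 1
              rw [HE3_one k l (by omega) hl]
              refine Finset.mem_image_of_mem _ ?_
              rw [HV_eq k l 1 (by omega) hl le_rfl (by omega)]
              exact Finset.mem_union_left _ (Finset.mem_union_left _
                (Finset.mem_union_left _ (Finset.mem_image_of_mem _ hv)))
            · intro w hw; rw [Finset.mem_singleton] at hw; subst hw
              exact hcol v (Finset.mem_singleton_self v)
          · have hm2 : 2 ≤ m := by omega
            refine ⟨2, e.image (List.cons 0), ?_, ?_⟩
            · show _ ∈ HE3 k l m
              rw [HE3_two k l m hk hl hm2]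
              exact Finset.mem_union_left _ (Finset.mem_union_right _
                (Finset.mem_image_of_mem _ he))
            · intro v hv; obtain ⟨w, hw, rfl⟩ := Finset.mem_image.1 hv; exact hcol w hw
    -- ================= branch b = 1 =================
    · by_cases hl1 : l = 1
      · subst hl1
        refine ⟨1, {[]}, ?_, ?_⟩
        · show _ ∈ HE2 k 1 m
          rw [HE2_one k m hk hm]
          exact Finset.mem_image_of_mem _ (nil_mem_HV k 1 m hk le_rfl hm)
        · intro v hv; rw [Finset.mem_singleton] at hv; subst hv; exact hb
      · have hl2 : 2 ≤ l := by omega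
        obtain ⟨i, e, he, hcol⟩ := ih k (l-1) m (by omega) hk (by omega) hm (fun v => χ (1 :: v))
        rcases fin3_cases i with rfl | rfl | rfl
        · replace he : e ∈ HE1 k (l-1) m := he
          by_cases hk1 : k = 1
          · subst hk1
            rw [HE1_one (l-1) m (by omega) hm] at he
            obtain ⟨v, hv, rfl⟩ := Finset.mem_image.1 he
            refine ⟨0, {(1:Fin 3) :: v}, ?_, ?_⟩
            · show _ ∈ HE1 1 l m
              rw [HE1_one l m (by omega) hm]
              refine Finset.mem_image_of_mem _ ?_
              rw [HV_eq 1 l m le_rfl (by omega) hm (by omega)]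
              exact Finset.mem_union_left _ (Finset.mem_union_left _
                (Finset.mem_union_right _ (Finset.mem_image_of_mem _ hv)))
            · intro w hw; rw [Finset.mem_singleton] at hw; subst hw
              exact hcol v (Finset.mem_singleton_self v)
          · have hk2 : 2 ≤ k := by omega
            refine ⟨0, e.image (List.cons 1), ?_, ?_⟩
            · show _ ∈ HE1 k l m
              rw [HE1_two k l m hk2 hl hm]
              exact Finset.mem_union_left _ (Finset.mem_union_right _
                (Finset.mem_image_of_mem _ he))
            · intro v hv; obtain ⟨w, hw, rfl⟩ := Finset.mem_image.1 hv; exact hcol w hw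
        · replace he : e ∈ HE2 k (l-1) m := he
          refine ⟨1, insert [] (e.image (List.cons 1)), ?_, ?_⟩
          · show _ ∈ HE2 k l m
            rw [HE2_two k l m hk hl2 hm]
            exact Finset.mem_union_left _ (Finset.mem_union_left _
              (Finset.mem_image_of_mem _ he))
          · intro v hv
            rcases Finset.mem_insert.1 hv with rfl | hv
            · exact hb
            · obtain ⟨w, hw, rfl⟩ := Finset.mem_image.1 hv; exact hcol w hw
        · replace he : e ∈ HE3 k (l-1) m := he
          by_cases hm1 : m = 1
          · subst hm1
            rw [HE3_one k (l-1) hk (by omega)] at he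
            obtain ⟨v, hv, rfl⟩ := Finset.mem_image.1 he
            refine ⟨2, {(1:Fin 3) :: v}, ?_, ?_⟩
            · show _ ∈ HE3 k l 1
              rw [HE3_one k l hk (by omega)]
              refine Finset.mem_image_of_mem _ ?_
              rw [HV_eq k l 1 hk (by omega) le_rfl (by omega)]
              exact Finset.mem_union_left _ (Finset.mem_union_left _
                (Finset.mem_union_right _ (Finset.mem_image_of_mem _ hv)))
            · intro w hw; rw [Finset.mem_singleton] at hw; subst hw
              exact hcol v (Finset.mem_singleton_self v)
          · have hm2 : 2 ≤ m := by omega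
            refine ⟨2, e.image (List.cons 1), ?_, ?_⟩
            · show _ ∈ HE3 k l m
              rw [HE3_two k l m hk hl hm2]
              exact Finset.mem_union_right _ (Finset.mem_image_of_mem _ he)
            · intro v hv; obtain ⟨w, hw, rfl⟩ := Finset.mem_image.1 hv; exact hcol w hw
    -- ================= branch b = 2 =================
    · by_cases hm1 : m = 1
      · subst hm1
        refine ⟨2, {[]}, ?_, ?_⟩
        · show _ ∈ HE3 k l 1
          rw [HE3_one k l hk hl]
          exact Finset.mem_image_of_mem _ (nil_mem_HV k l 1 hk hl le_rfl)
        · intro v hv; rw [Finset.mem_singleton] at hv; subst hv; exact hb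
      · have hm2 : 2 ≤ m := by omega
        obtain ⟨i, e, he, hcol⟩ := ih k l (m-1) (by omega) hk hl (by omega) (fun v => χ (2 :: v))
        rcases fin3_cases i with rfl | rfl | rfl
        · replace he : e ∈ HE1 k l (m-1) := he
          by_cases hk1 : k = 1
          · subst hk1
            rw [HE1_one l (m-1) hl (by omega)] at he
            obtain ⟨v, hv, rfl⟩ := Finset.mem_image.1 he
            refine ⟨0, {(2:Fin 3) :: v}, ?_, ?_⟩
            · show _ ∈ HE1 1 l m
              rw [HE1_one l m hl (by omega)]
              refine Finset.mem_image_of_mem _ ?_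
              rw [HV_eq 1 l m le_rfl hl (by omega) (by omega)]
              exact Finset.mem_union_left _ (Finset.mem_union_right _
                (Finset.mem_image_of_mem _ hv))
            · intro w hw; rw [Finset.mem_singleton] at hw; subst hw
              exact hcol v (Finset.mem_singleton_self v)
          · have hk2 : 2 ≤ k := by omega
            refine ⟨0, e.image (List.cons 2), ?_, ?_⟩
            · show _ ∈ HE1 k l m
              rw [HE1_two k l m hk2 hl hm]
              exact Finset.mem_union_right _ (Finset.mem_image_of_mem _ he)
            · intro v hv; obtain ⟨w, hw, rfl⟩ := Finset.mem_image.1 hv; exact hcol w hw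
        · replace he : e ∈ HE2 k l (m-1) := he
          by_cases hl1 : l = 1
          · subst hl1
            rw [HE2_one k (m-1) hk (by omega)] at he
            obtain ⟨v, hv, rfl⟩ := Finset.mem_image.1 he
            refine ⟨1, {(2:Fin 3) :: v}, ?_, ?_⟩
            · show _ ∈ HE2 k 1 m
              rw [HE2_one k m hk (by omega)]
              refine Finset.mem_image_of_mem _ ?_
              rw [HV_eq k 1 m hk le_rfl (by omega) (by omega)]
              exact Finset.mem_union_left _ (Finset.mem_union_right _
                (Finset.mem_image_of_mem _ hv))
            · intro w hw; rw [Finset.mem_singleton] at hw; subst hw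
              exact hcol v (Finset.mem_singleton_self v)
          · have hl2 : 2 ≤ l := by omega
            refine ⟨1, e.image (List.cons 2), ?_, ?_⟩
            · show _ ∈ HE2 k l m
              rw [HE2_two k l m hk hl2 hm]
              exact Finset.mem_union_right _ (Finset.mem_image_of_mem _ he)
            · intro v hv; obtain ⟨w, hw, rfl⟩ := Finset.mem_image.1 hv; exact hcol w hw
        · replace he : e ∈ HE3 k l (m-1) := he
          refine ⟨2, insert [] (e.image (List.cons 2)), ?_, ?_⟩
          · show _ ∈ HE3 k l m
            rw [HE3_two k l m hk hl hm2]
            exact Finset.mem_union_left _ (Finset.mem_union_left _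
              (Finset.mem_image_of_mem _ he))
          · intro v hv
            rcases Finset.mem_insert.1 hv with rfl | hv
            · exact hb
            · obtain ⟨w, hw, rfl⟩ := Finset.mem_image.1 hv; exact hcol w hw
/-- In every 3-coloring of `H(k,l,m)` with colors `c₁ = 0, c₂ = 1, c₃ = 2`, there is an
index `i` and an edge in `Eᵢ(k,l,m)` all of whose vertices get color `cᵢ`. -/
theorem stmt_0 (k l m : ℕ) (hk : 1 ≤ k) (hl : 1 ≤ l) (hm : 1 ≤ m)
    (χ : List (Fin 3) → Fin 3) :
    ∃ i : Fin 3, ∃ e ∈ HE k l m i, ∀ v ∈ e, χ v = i :=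
  HH_main (k + l + m) k l m le_rfl hk hl hm χ
end

section
/- For every m ≥ 1, the m-uniform hypergraph H(m,m,m) (defined by the recursion above with k = l = m) has no proper 3-coloring; that is, for every 3-coloring of its vertices some edge is monochromatic. -/
lemma rec_eq (fuel k l m : ℕ) (h0 : ¬(k = 0 ∨ l = 0 ∨ m = 0)) (h1 : ¬(k = 1 ∧ l = 1 ∧ m = 1)) :
    HHrec (fuel+1) k l m =
      (let A := HHrec fuel (k-1) l m
      let B := HHrec fuel k (l-1) m
      let C := HHrec fuel k l (m-1)
      let V : Finset (List (Fin 3)) :=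
        A.1.image (List.cons 0) ∪ B.1.image (List.cons 1) ∪ C.1.image (List.cons 2)
          ∪ {([] : List (Fin 3))}
      let E1 : Finset (Finset (List (Fin 3))) :=
        if k = 1 then V.image (fun v => ({v} : Finset (List (Fin 3))))
        else A.2.1.image (fun e => insert ([] : List (Fin 3)) (e.image (List.cons 0)))
          ∪ B.2.1.image (fun e => e.image (List.cons 1))
          ∪ C.2.1.image (fun e => e.image (List.cons 2))
      let E2 : Finset (Finset (List (Fin 3))) :=
        if l = 1 then V.image (fun v => ({v} : Finset (List (Fin 3))))
        else B.2.2.1.image (fun e => insert ([] : List (Fin 3)) (e.image (List.cons 1)))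
          ∪ A.2.2.1.image (fun e => e.image (List.cons 0))
          ∪ C.2.2.1.image (fun e => e.image (List.cons 2))
      let E3 : Finset (Finset (List (Fin 3))) :=
        if m = 1 then V.image (fun v => ({v} : Finset (List (Fin 3))))
        else C.2.2.2.image (fun e => insert ([] : List (Fin 3)) (e.image (List.cons 2)))
          ∪ A.2.2.2.image (fun e => e.image (List.cons 0))
          ∪ B.2.2.2.image (fun e => e.image (List.cons 1))
      (V, E1, E2, E3)) := by
  rw [HHrec]
  simp only [h0, h1, if_false]

lemma base_eq (fuel : ℕ) :
    HHrec (fuel+1) 1 1 1 = ({[]}, {{[]}}, {{[]}}, {{[]}}) := by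
  rw [HHrec]; simp

lemma tri (c : Fin 3) : c = 0 ∨ c = 1 ∨ c = 2 := by revert c; decide

section
variable {fuel k l m : ℕ} (h0 : ¬(k = 0 ∨ l = 0 ∨ m = 0)) (h1 : ¬(k = 1 ∧ l = 1 ∧ m = 1))
include h0 h1

lemma memV_nil : ([] : List (Fin 3)) ∈ (HHrec (fuel+1) k l m).1 := by
  rw [rec_eq fuel k l m h0 h1]; simp

lemma memV_cons0 {w : List (Fin 3)} (hw : w ∈ (HHrec fuel (k-1) l m).1) :
    (0 :: w) ∈ (HHrec (fuel+1) k l m).1 := by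
  rw [rec_eq fuel k l m h0 h1]
  simp only [Finset.mem_union, Finset.mem_image]
  exact Or.inl (Or.inl (Or.inl ⟨w, hw, rfl⟩))

lemma memV_cons1 {w : List (Fin 3)} (hw : w ∈ (HHrec fuel k (l-1) m).1) :
    (1 :: w) ∈ (HHrec (fuel+1) k l m).1 := by
  rw [rec_eq fuel k l m h0 h1]
  simp only [Finset.mem_union, Finset.mem_image]
  exact Or.inl (Or.inl (Or.inr ⟨w, hw, rfl⟩))

lemma memV_cons2 {w : List (Fin 3)} (hw : w ∈ (HHrec fuel k l (m-1)).1) :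
    (2 :: w) ∈ (HHrec (fuel+1) k l m).1 := by
  rw [rec_eq fuel k l m h0 h1]
  simp only [Finset.mem_union, Finset.mem_image]
  exact Or.inl (Or.inr ⟨w, hw, rfl⟩)

variable {e : Finset (List (Fin 3))}

lemma memE1_ins (hk : k ≠ 1) (he : e ∈ (HHrec fuel (k-1) l m).2.1) :
    insert ([] : List (Fin 3)) (e.image (List.cons 0)) ∈ (HHrec (fuel+1) k l m).2.1 := by
  rw [rec_eq fuel k l m h0 h1]
  simp only [if_neg hk, Finset.mem_union, Finset.mem_image]
  exact Or.inl (Or.inl ⟨e, he, rfl⟩)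

lemma memE1_b (hk : k ≠ 1) (he : e ∈ (HHrec fuel k (l-1) m).2.1) :
    e.image (List.cons 1) ∈ (HHrec (fuel+1) k l m).2.1 := by
  rw [rec_eq fuel k l m h0 h1]
  simp only [if_neg hk, Finset.mem_union, Finset.mem_image]
  exact Or.inl (Or.inr ⟨e, he, rfl⟩)

lemma memE1_c (hk : k ≠ 1) (he : e ∈ (HHrec fuel k l (m-1)).2.1) :
    e.image (List.cons 2) ∈ (HHrec (fuel+1) k l m).2.1 := by
  rw [rec_eq fuel k l m h0 h1]
  simp only [if_neg hk, Finset.mem_union, Finset.mem_image]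
  exact Or.inr ⟨e, he, rfl⟩

lemma memE2_ins (hl : l ≠ 1) (he : e ∈ (HHrec fuel k (l-1) m).2.2.1) :
    insert ([] : List (Fin 3)) (e.image (List.cons 1)) ∈ (HHrec (fuel+1) k l m).2.2.1 := by
  rw [rec_eq fuel k l m h0 h1]
  simp only [if_neg hl, Finset.mem_union, Finset.mem_image]
  exact Or.inl (Or.inl ⟨e, he, rfl⟩)

lemma memE2_a (hl : l ≠ 1) (he : e ∈ (HHrec fuel (k-1) l m).2.2.1) :
    e.image (List.cons 0) ∈ (HHrec (fuel+1) k l m).2.2.1 := by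
  rw [rec_eq fuel k l m h0 h1]
  simp only [if_neg hl, Finset.mem_union, Finset.mem_image]
  exact Or.inl (Or.inr ⟨e, he, rfl⟩)

lemma memE2_c (hl : l ≠ 1) (he : e ∈ (HHrec fuel k l (m-1)).2.2.1) :
    e.image (List.cons 2) ∈ (HHrec (fuel+1) k l m).2.2.1 := by
  rw [rec_eq fuel k l m h0 h1]
  simp only [if_neg hl, Finset.mem_union, Finset.mem_image]
  exact Or.inr ⟨e, he, rfl⟩

lemma memE3_ins (hm : m ≠ 1) (he : e ∈ (HHrec fuel k l (m-1)).2.2.2) :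
    insert ([] : List (Fin 3)) (e.image (List.cons 2)) ∈ (HHrec (fuel+1) k l m).2.2.2 := by
  rw [rec_eq fuel k l m h0 h1]
  simp only [if_neg hm, Finset.mem_union, Finset.mem_image]
  exact Or.inl (Or.inl ⟨e, he, rfl⟩)

lemma memE3_a (hm : m ≠ 1) (he : e ∈ (HHrec fuel (k-1) l m).2.2.2) :
    e.image (List.cons 0) ∈ (HHrec (fuel+1) k l m).2.2.2 := by
  rw [rec_eq fuel k l m h0 h1]
  simp only [if_neg hm, Finset.mem_union, Finset.mem_image]
  exact Or.inl (Or.inr ⟨e, he, rfl⟩)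

lemma memE3_b (hm : m ≠ 1) (he : e ∈ (HHrec fuel k (l-1) m).2.2.2) :
    e.image (List.cons 1) ∈ (HHrec (fuel+1) k l m).2.2.2 := by
  rw [rec_eq fuel k l m h0 h1]
  simp only [if_neg hm, Finset.mem_union, Finset.mem_image]
  exact Or.inr ⟨e, he, rfl⟩

end

lemma sing1 : ∀ (fuel k l m : ℕ), k = 1 →
    (HHrec fuel k l m).2.1
      = (HHrec fuel k l m).1.image (fun v => ({v} : Finset (List (Fin 3))))
  | 0, _, _, _, _ => by simp [HHrec]
  | fuel+1, k, l, m, hk => by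
    by_cases h0 : k = 0 ∨ l = 0 ∨ m = 0
    · rw [HHrec]; simp [h0]
    · by_cases h1 : k = 1 ∧ l = 1 ∧ m = 1
      · rw [HHrec]; simp [h0, h1]
      · rw [rec_eq fuel k l m h0 h1]; simp [hk]

lemma sing2 : ∀ (fuel k l m : ℕ), l = 1 →
    (HHrec fuel k l m).2.2.1
      = (HHrec fuel k l m).1.image (fun v => ({v} : Finset (List (Fin 3))))
  | 0, _, _, _, _ => by simp [HHrec]
  | fuel+1, k, l, m, hl => by
    by_cases h0 : k = 0 ∨ l = 0 ∨ m = 0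
    · rw [HHrec]; simp [h0]
    · by_cases h1 : k = 1 ∧ l = 1 ∧ m = 1
      · rw [HHrec]; simp [h0, h1]
      · rw [rec_eq fuel k l m h0 h1]; simp [hl]

lemma sing3 : ∀ (fuel k l m : ℕ), m = 1 →
    (HHrec fuel k l m).2.2.2
      = (HHrec fuel k l m).1.image (fun v => ({v} : Finset (List (Fin 3))))
  | 0, _, _, _, _ => by simp [HHrec]
  | fuel+1, k, l, m, hm => by
    by_cases h0 : k = 0 ∨ l = 0 ∨ m = 0
    · rw [HHrec]; simp [h0]
    · by_cases h1 : k = 1 ∧ l = 1 ∧ m = 1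
      · rw [HHrec]; simp [h0, h1]
      · rw [rec_eq fuel k l m h0 h1]; simp [hm]

lemma main : ∀ (fuel k l m : ℕ), 1 ≤ k → 1 ≤ l → 1 ≤ m → k + l + m ≤ fuel →
    ∀ χ : List (Fin 3) → Fin 3,
      (∃ e ∈ (HHrec fuel k l m).2.1, ∀ v ∈ e, χ v = 0) ∨
      (∃ e ∈ (HHrec fuel k l m).2.2.1, ∀ v ∈ e, χ v = 1) ∨
      (∃ e ∈ (HHrec fuel k l m).2.2.2, ∀ v ∈ e, χ v = 2)
  | 0, k, l, m, hk, hl, hm, hf, χ => by omega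
  | fuel+1, k, l, m, hk, hl, hm, hf, χ => by
    have h0 : ¬(k = 0 ∨ l = 0 ∨ m = 0) := by omega
    by_cases h1 : k = 1 ∧ l = 1 ∧ m = 1
    · obtain ⟨rfl, rfl, rfl⟩ := h1
      rw [base_eq]
      rcases tri (χ []) with h | h | h
      · exact Or.inl ⟨{[]}, by simp, by simpa using h⟩
      · exact Or.inr (Or.inl ⟨{[]}, by simp, by simpa using h⟩)
      · exact Or.inr (Or.inr ⟨{[]}, by simp, by simpa using h⟩)
    · rcases tri (χ []) with h | h | h
      -- χ [] = 0 : recurse into A = H(k-1, l, m)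
      · by_cases hk1 : k = 1
        · refine Or.inl ⟨{[]}, ?_, by simpa using h⟩
          rw [sing1 (fuel+1) k l m hk1]
          exact Finset.mem_image_of_mem _ (memV_nil h0 h1)
        · rcases main fuel (k-1) l m (by omega) hl hm (by omega) (fun v => χ (0 :: v)) with
            ⟨e, he, hmono⟩ | ⟨e, he, hmono⟩ | ⟨e, he, hmono⟩
          · refine Or.inl ⟨insert [] (e.image (List.cons 0)), memE1_ins h0 h1 hk1 he, ?_⟩
            intro v hv
            rcases Finset.mem_insert.1 hv with rfl | hv
            · exact h
            · obtain ⟨w, hw, rfl⟩ := Finset.mem_image.1 hv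
              exact hmono w hw
          · refine Or.inr (Or.inl ⟨e.image (List.cons 0), ?_, ?_⟩)
            · by_cases hl1 : l = 1
              · rw [sing2 fuel (k-1) l m hl1] at he
                obtain ⟨w, hw, rfl⟩ := Finset.mem_image.1 he
                rw [sing2 (fuel+1) k l m hl1, Finset.image_singleton]
                exact Finset.mem_image_of_mem _ (memV_cons0 h0 h1 hw)
              · exact memE2_a h0 h1 hl1 he
            · intro v hv
              obtain ⟨w, hw, rfl⟩ := Finset.mem_image.1 hv
              exact hmono w hw
          · refine Or.inr (Or.inr ⟨e.image (List.cons 0), ?_, ?_⟩)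
            · by_cases hm1 : m = 1
              · rw [sing3 fuel (k-1) l m hm1] at he
                obtain ⟨w, hw, rfl⟩ := Finset.mem_image.1 he
                rw [sing3 (fuel+1) k l m hm1, Finset.image_singleton]
                exact Finset.mem_image_of_mem _ (memV_cons0 h0 h1 hw)
              · exact memE3_a h0 h1 hm1 he
            · intro v hv
              obtain ⟨w, hw, rfl⟩ := Finset.mem_image.1 hv
              exact hmono w hw
      -- χ [] = 1 : recurse into B = H(k, l-1, m)
      · by_cases hl1 : l = 1
        · refine Or.inr (Or.inl ⟨{[]}, ?_, by simpa using h⟩)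
          rw [sing2 (fuel+1) k l m hl1]
          exact Finset.mem_image_of_mem _ (memV_nil h0 h1)
        · rcases main fuel k (l-1) m hk (by omega) hm (by omega) (fun v => χ (1 :: v)) with
            ⟨e, he, hmono⟩ | ⟨e, he, hmono⟩ | ⟨e, he, hmono⟩
          · refine Or.inl ⟨e.image (List.cons 1), ?_, ?_⟩
            · by_cases hk1 : k = 1
              · rw [sing1 fuel k (l-1) m hk1] at he
                obtain ⟨w, hw, rfl⟩ := Finset.mem_image.1 he
                rw [sing1 (fuel+1) k l m hk1, Finset.image_singleton]
                exact Finset.mem_image_of_mem _ (memV_cons1 h0 h1 hw)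
              · exact memE1_b h0 h1 hk1 he
            · intro v hv
              obtain ⟨w, hw, rfl⟩ := Finset.mem_image.1 hv
              exact hmono w hw
          · refine Or.inr (Or.inl ⟨insert [] (e.image (List.cons 1)), memE2_ins h0 h1 hl1 he, ?_⟩)
            intro v hv
            rcases Finset.mem_insert.1 hv with rfl | hv
            · exact h
            · obtain ⟨w, hw, rfl⟩ := Finset.mem_image.1 hv
              exact hmono w hw
          · refine Or.inr (Or.inr ⟨e.image (List.cons 1), ?_, ?_⟩)
            · by_cases hm1 : m = 1
              · rw [sing3 fuel k (l-1) m hm1] at he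
                obtain ⟨w, hw, rfl⟩ := Finset.mem_image.1 he
                rw [sing3 (fuel+1) k l m hm1, Finset.image_singleton]
                exact Finset.mem_image_of_mem _ (memV_cons1 h0 h1 hw)
              · exact memE3_b h0 h1 hm1 he
            · intro v hv
              obtain ⟨w, hw, rfl⟩ := Finset.mem_image.1 hv
              exact hmono w hw
      -- χ [] = 2 : recurse into C = H(k, l, m-1)
      · by_cases hm1 : m = 1
        · refine Or.inr (Or.inr ⟨{[]}, ?_, by simpa using h⟩)
          rw [sing3 (fuel+1) k l m hm1]
          exact Finset.mem_image_of_mem _ (memV_nil h0 h1)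
        · rcases main fuel k l (m-1) hk hl (by omega) (by omega) (fun v => χ (2 :: v)) with
            ⟨e, he, hmono⟩ | ⟨e, he, hmono⟩ | ⟨e, he, hmono⟩
          · refine Or.inl ⟨e.image (List.cons 2), ?_, ?_⟩
            · by_cases hk1 : k = 1
              · rw [sing1 fuel k l (m-1) hk1] at he
                obtain ⟨w, hw, rfl⟩ := Finset.mem_image.1 he
                rw [sing1 (fuel+1) k l m hk1, Finset.image_singleton]
                exact Finset.mem_image_of_mem _ (memV_cons2 h0 h1 hw)
              · exact memE1_c h0 h1 hk1 he
            · intro v hv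
              obtain ⟨w, hw, rfl⟩ := Finset.mem_image.1 hv
              exact hmono w hw
          · refine Or.inr (Or.inl ⟨e.image (List.cons 2), ?_, ?_⟩)
            · by_cases hl1 : l = 1
              · rw [sing2 fuel k l (m-1) hl1] at he
                obtain ⟨w, hw, rfl⟩ := Finset.mem_image.1 he
                rw [sing2 (fuel+1) k l m hl1, Finset.image_singleton]
                exact Finset.mem_image_of_mem _ (memV_cons2 h0 h1 hw)
              · exact memE2_c h0 h1 hl1 he
            · intro v hv
              obtain ⟨w, hw, rfl⟩ := Finset.mem_image.1 hv
              exact hmono w hw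
          · refine Or.inr (Or.inr ⟨insert [] (e.image (List.cons 2)), memE3_ins h0 h1 hm1 he, ?_⟩)
            intro v hv
            rcases Finset.mem_insert.1 hv with rfl | hv
            · exact h
            · obtain ⟨w, hw, rfl⟩ := Finset.mem_image.1 hv
              exact hmono w hw

/-- The `m`-uniform hypergraph `H(m,m,m)` has no proper 3-coloring: for every 3-coloring
of its vertices, some edge is monochromatic. -/
theorem stmt_2 (m : ℕ) (hm : 1 ≤ m) (χ : List (Fin 3) → Fin 3) :
    ∃ e ∈ HE1 m m m ∪ HE2 m m m ∪ HE3 m m m, ∃ c : Fin 3, ∀ v ∈ e, χ v = c := by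
  rcases main (m+m+m) m m m hm hm hm le_rfl χ with ⟨e, he, hmono⟩ | ⟨e, he, hmono⟩ | ⟨e, he, hmono⟩
  · exact ⟨e, Finset.mem_union.2 (Or.inl (Finset.mem_union.2 (Or.inl he))), 0, hmono⟩
  · exact ⟨e, Finset.mem_union.2 (Or.inl (Finset.mem_union.2 (Or.inr he))), 1, hmono⟩
  · exact ⟨e, Finset.mem_union.2 (Or.inr he), 2, hmono⟩
end

section
/- Let H = (V, E) be a hypergraph, let c, t be positive integers, and suppose: (i) every edge e ∈ E with |e| ≥ t that is monochromatic under a given c-coloring χ : V → {1,…,c} contains a point of a distinguished set R ⊆ V; (ii) every edge e ∈ E containing at least t points of R of the same χ-color also contains a point of V \ R of that same color. Let χ' be any coloring obtained from χ by changing the color of each vertex of R to some different color (arbitrarily), leaving V \ R unchanged. Then every edge e ∈ E that contains at least c·t points of R is non-monochromatic under χ'. -/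
/-- The recoloring step of Lemma `main`: if (i) every monochromatic edge with at least `t`
vertices meets `R`, and (ii) every edge with at least `t` points of `R` of one color also
contains a point of `V \ R` of that color, then after recoloring each vertex of `R` to a
different color (leaving `V \ R` unchanged), every edge containing at least `c·t` points
of `R` is non-monochromatic. -/
theorem stmt_7 {V : Type*} [DecidableEq V] (E : Finset (Finset V)) (c t : ℕ)
    (hc : 0 < c) (ht : 0 < t) (R : Finset V) (χ χ' : V → Fin c)
    (hi : ∀ e ∈ E, t ≤ e.card → (∃ col : Fin c, ∀ v ∈ e, χ v = col) → ∃ r ∈ R, r ∈ e)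
    (hii : ∀ e ∈ E, ∀ col : Fin c,
      t ≤ ((e ∩ R).filter (fun v => χ v = col)).card → ∃ v ∈ e, v ∉ R ∧ χ v = col)
    (hre : ∀ v ∈ R, χ' v ≠ χ v) (hkeep : ∀ v, v ∉ R → χ' v = χ v) :
    ∀ e ∈ E, c * t ≤ (e ∩ R).card → ¬ ∃ col : Fin c, ∀ v ∈ e, χ' v = col := by
  intro e he hcard ⟨col', hmono⟩
  haveI : Nonempty (Fin c) := ⟨⟨0, hc⟩⟩
  -- pigeonhole: some color col has ≥ t points of e ∩ R
  obtain ⟨col, -, hcol⟩ := Finset.exists_le_card_fiber_of_mul_le_card_of_maps_to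
    (s := e ∩ R) (f := χ) (t := (Finset.univ : Finset (Fin c)))
    (hf := fun a _ => Finset.mem_univ _) (ht := Finset.univ_nonempty)
    (hn := by simpa using hcard)
  obtain ⟨v, hv, hvR, hvcol⟩ := hii e he col hcol
  -- there is also some r ∈ e ∩ R with χ r = col
  have hfil : ((e ∩ R).filter (fun v => χ v = col)).Nonempty :=
    Finset.card_pos.mp (lt_of_lt_of_le ht hcol)
  obtain ⟨r, hr⟩ := hfil
  simp only [Finset.mem_filter, Finset.mem_inter] at hr
  obtain ⟨⟨hre', hrR⟩, hrcol⟩ := hr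
  have h1 : χ' v = col := (hkeep v hvR).trans hvcol
  have h2 : χ' r ≠ col := hrcol ▸ hre r hrR
  exact h2 ((hmono r hre').trans ((hmono v hv).symm.trans h1))
end

section
/- For every convex polygon D and positive integer k, if (A) every finite point set admits a 3-coloring with no monochromatic homothet of D containing ≥ m points, and (B) every homothet of D containing ≥ M points contains, in any such 3-coloring, at least two color classes each with ≥ m points (for suitable M depending on m and D), then every finite point set admits a 3^k-coloring such that every homothet of D containing at least M_k points (for suitable M_k) contains at least 2^k distinct colors. -/
open scoped Classical

/-- `D'` is a homothetic copy (positive scaling plus translation) of `D`. -/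
def IsHomothet (D D' : Set (ℝ × ℝ)) : Prop :=
  ∃ lam : ℝ, 0 < lam ∧ ∃ v : ℝ × ℝ, D' = (fun p => lam • p + v) '' D

/-- Iterated recoloring: if (A) every finite point set admits a 3-coloring in which no
homothet of `D` with at least `m` points is monochromatic, and (B) in any such 3-coloring
every homothet with at least `M` points meets two color classes each with at least `m`
points, then for every `k` there is an `M_k` such that every finite point set admits a
`3^k`-coloring in which every homothet of `D` with at least `M_k` points contains at least
`2^k` distinct colors. -/
theorem stmt_16 (D : Set (ℝ × ℝ))
    (hA : ∃ m : ℕ, ∀ S : Finset (ℝ × ℝ), ∃ χ : ℝ × ℝ → Fin 3,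
      ∀ D' : Set (ℝ × ℝ), IsHomothet D D' → m ≤ (S.filter (fun p => p ∈ D')).card →
        ∃ p ∈ S, ∃ q ∈ S, p ∈ D' ∧ q ∈ D' ∧ χ p ≠ χ q)
    (hB : ∀ m : ℕ, ∃ M : ℕ, ∀ (S : Finset (ℝ × ℝ)) (χ : ℝ × ℝ → Fin 3),
      (∀ D' : Set (ℝ × ℝ), IsHomothet D D' → m ≤ (S.filter (fun p => p ∈ D')).card →
        ∃ p ∈ S, ∃ q ∈ S, p ∈ D' ∧ q ∈ D' ∧ χ p ≠ χ q) →
      ∀ D' : Set (ℝ × ℝ), IsHomothet D D' → M ≤ (S.filter (fun p => p ∈ D')).card →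
        ∃ c₁ c₂ : Fin 3, c₁ ≠ c₂ ∧
          m ≤ ((S.filter (fun p => p ∈ D')).filter (fun p => χ p = c₁)).card ∧
          m ≤ ((S.filter (fun p => p ∈ D')).filter (fun p => χ p = c₂)).card) :
    ∀ k : ℕ, ∃ Mk : ℕ, ∀ S : Finset (ℝ × ℝ), ∃ χ : ℝ × ℝ → Fin (3 ^ k),
      ∀ D' : Set (ℝ × ℝ), IsHomothet D D' → Mk ≤ (S.filter (fun p => p ∈ D')).card →
        2 ^ k ≤ ((S.filter (fun p => p ∈ D')).image χ).card := by
  obtain ⟨m, hm⟩ := hA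
  intro k
  induction k with
  | zero =>
    refine ⟨1, fun S => ⟨fun _ => 0, fun D' hD' hcard => ?_⟩⟩
    have hne : (S.filter (fun p => p ∈ D')).Nonempty := Finset.card_pos.mp (by omega)
    simpa using Finset.card_pos.mpr (hne.image (fun _ => (0 : Fin (3 ^ 0))))
  | succ k ih =>
    obtain ⟨Mk, hMk⟩ := ih
    obtain ⟨M, hM⟩ := hB (max m Mk)
    refine ⟨M, fun S => ?_⟩
    obtain ⟨χ₀, hχ₀⟩ := hm S
    choose F hF using fun c : Fin 3 => hMk (S.filter (fun p => χ₀ p = c))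
    have e : Fin 3 × Fin (3 ^ k) ≃ Fin (3 ^ (k + 1)) :=
      finProdFinEquiv.trans (finCongr (by ring))
    set χ : ℝ × ℝ → Fin (3 ^ (k + 1)) := fun p => e (χ₀ p, F (χ₀ p) p) with hχdef
    refine ⟨χ, fun D' hD' hcard => ?_⟩
    have hχ₀' : ∀ D'' : Set (ℝ × ℝ), IsHomothet D D'' →
        max m Mk ≤ (S.filter (fun p => p ∈ D'')).card →
        ∃ p ∈ S, ∃ q ∈ S, p ∈ D'' ∧ q ∈ D'' ∧ χ₀ p ≠ χ₀ q :=
      fun D'' h hc => hχ₀ D'' h (le_trans (le_max_left _ _) hc)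
    obtain ⟨c₁, c₂, hne, h1, h2⟩ := hM S χ₀ hχ₀' D' hD' hcard
    set T := S.filter (fun p => p ∈ D') with hT
    -- swap filters
    have hswap : ∀ c : Fin 3, T.filter (fun p => χ₀ p = c)
        = (S.filter (fun p => χ₀ p = c)).filter (fun p => p ∈ D') := by
      intro c
      simp only [hT, Finset.filter_filter]
      exact Finset.filter_congr (fun x _ => by tauto)
    have key : ∀ c : Fin 3, Mk ≤ (T.filter (fun p => χ₀ p = c)).card →
        2 ^ k ≤ ((T.filter (fun p => χ₀ p = c)).image χ).card := by
      intro c hc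
      have h2k : 2 ^ k ≤ (((S.filter (fun p => χ₀ p = c)).filter (fun p => p ∈ D')).image
          (F c)).card := hF c D' hD' (by rw [← hswap]; exact hc)
      rw [← hswap] at h2k
      have himg : (T.filter (fun p => χ₀ p = c)).image χ
          = ((T.filter (fun p => χ₀ p = c)).image (F c)).image (fun x => e (c, x)) := by
        rw [Finset.image_image]
        apply Finset.image_congr
        intro p hp
        have : χ₀ p = c := (Finset.mem_filter.mp hp).2
        simp [hχdef, this]
      rw [himg, Finset.card_image_of_injective _
        (fun a b hab => by simpa using e.injective hab)]
      exact h2k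
    have k1 := key c₁ (le_trans (le_max_right _ _) h1)
    have k2 := key c₂ (le_trans (le_max_right _ _) h2)
    have hdisj : Disjoint ((T.filter (fun p => χ₀ p = c₁)).image χ)
        ((T.filter (fun p => χ₀ p = c₂)).image χ) := by
      rw [Finset.disjoint_left]
      rintro x hx1 hx2
      obtain ⟨p, hp, hpx⟩ := Finset.mem_image.mp hx1
      obtain ⟨q, hq, hqx⟩ := Finset.mem_image.mp hx2
      have hp1 : χ₀ p = c₁ := (Finset.mem_filter.mp hp).2
      have hq2 : χ₀ q = c₂ := (Finset.mem_filter.mp hq).2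
      have : (χ₀ p, F (χ₀ p) p) = (χ₀ q, F (χ₀ q) q) := e.injective (by
        simpa [hχdef] using hpx.trans hqx.symm)
      exact hne (hp1 ▸ hq2 ▸ congrArg Prod.fst this)
    have hsub : (T.filter (fun p => χ₀ p = c₁)).image χ ∪
        (T.filter (fun p => χ₀ p = c₂)).image χ ⊆ T.image χ := by
      apply Finset.union_subset <;>
        exact Finset.image_subset_image (Finset.filter_subset _ _)
    calc 2 ^ (k + 1) = 2 ^ k + 2 ^ k := by ring
      _ ≤ ((T.filter (fun p => χ₀ p = c₁)).image χ).card
          + ((T.filter (fun p => χ₀ p = c₂)).image χ).card := Nat.add_le_add k1 k2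
      _ = ((T.filter (fun p => χ₀ p = c₁)).image χ ∪
          (T.filter (fun p => χ₀ p = c₂)).image χ).card :=
        (Finset.card_union_of_disjoint hdisj).symm
      _ ≤ (T.image χ).card := Finset.card_le_card hsub
end
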